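/- Let F̃_r be the equal-radius multi-kernel hypothesis class consisting of all pairs (w, θ) with w_t = (w_t^1,…,w_t^M) ∈ H_1×⋯×H_M satisfying Σ_{m=1}^M ‖w_t^m‖² ≤ R for all t, and θ ∈ ℝ^M with θ_m ≥ 0 and Σ_m θ_m^r ≤ 1; its empirical Rademacher complexity is R̂(F̃_r) = E_σ[ sup_{(w,θ)} (2/(TN)) Σ_{t,i} σ_t^i Σ_m √θ_m ⟨w_t^m, φ_{m,t}^i⟩ ]. Then R̂(F̃_r) = (2√R/(TN)) · E_σ[ sup_{θ ≥ 0, ‖θ‖_r ≤ 1} Σ_{t=1}^T √( Σ_{m=1}^M θ_m ‖Σ_{i=1}^N σ_t^i φ_{m,t}^i‖² ) ], which is the value of the formula for R̂(F_{s,r}) at s* = 1; hence R̂(F̃_r) = sup_{s ≥ 1} R̂(F_{s,r}) = lim_{s→∞} R̂(F_{s,r}), i.e., F̃_r is the s = +∞ member of the family F_{s,r}. -/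

import Mathlib

open scoped BigOperators
open RealInnerProductSpace

noncomputable section

/-- The sign `+1`/`-1` associated with a Boolean, used to realize Rademacher variables. -/
def sgn (b : Bool) : ℝ := if b then 1 else -1

/-- Expectation over i.i.d. Rademacher variables `σ_t^i` (`t = 1,…,T`, `i = 1,…,N`),
realized as the uniform average over all sign patterns. -/
def Eσ (T N : ℕ) (f : (Fin T → Fin N → Bool) → ℝ) : ℝ :=
  (∑ σ : Fin T → Fin N → Bool, f σ) / (Fintype.card (Fin T → Fin N → Bool) : ℝ)

/-- Admissibility of a triple `(w, θ, λ)` for the multi-kernel hypothesis class `F_{s,r}`: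
`θ ⪰ 0` with `‖θ‖_r ≤ 1`, `λ ⪰ 0` with `‖λ‖_s ≤ 1`, and `Σ_m ‖w_t^m‖² ≤ λ_t² R` for all `t`. -/
def MKadm {M T : ℕ} (H : Fin M → Type*) [∀ m, NormedAddCommGroup (H m)]
    [∀ m, InnerProductSpace ℝ (H m)] (s r R : ℝ)
    (w : Fin T → ∀ m, H m) (θ : Fin M → ℝ) (lam : Fin T → ℝ) : Prop :=
  (∀ m, 0 ≤ θ m) ∧ (∑ m, θ m ^ r) ≤ 1 ∧
    (∀ t, 0 ≤ lam t) ∧ (∑ t, lam t ^ s) ≤ 1 ∧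
    ∀ t, (∑ m, ‖w t m‖ ^ 2) ≤ lam t ^ 2 * R

/-- Empirical Rademacher complexity of the multi-kernel hypothesis class `F_{s,r}`, with
respect to the sampled feature vectors `φ_{m,t}^i`. -/
def ERCmk {M : ℕ} (H : Fin M → Type*) [∀ m, NormedAddCommGroup (H m)]
    [∀ m, InnerProductSpace ℝ (H m)] (T N : ℕ)
    (φ : ∀ m, Fin T → Fin N → H m) (s r R : ℝ) : ℝ :=
  Eσ T N (fun σ => sSup {v : ℝ |
    ∃ (w : Fin T → ∀ m, H m) (θ : Fin M → ℝ) (lam : Fin T → ℝ),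
      MKadm H s r R w θ lam ∧
      v = (2 / ((T : ℝ) * N)) *
        ∑ t, ∑ i, sgn (σ t i) * ∑ m, Real.sqrt (θ m) * ⟪w t m, φ m t i⟫})

/-- Empirical Rademacher complexity of the equal-radius multi-kernel class `F̃_r`:
pairs `(w, θ)` with `Σ_m ‖w_t^m‖² ≤ R` for all `t` and `θ ⪰ 0`, `‖θ‖_r ≤ 1`. -/
def ERCtildeR {M : ℕ} (H : Fin M → Type*) [∀ m, NormedAddCommGroup (H m)]
    [∀ m, InnerProductSpace ℝ (H m)] (T N : ℕ)
    (φ : ∀ m, Fin T → Fin N → H m) (r R : ℝ) : ℝ :=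
  Eσ T N (fun σ => sSup {v : ℝ |
    ∃ (w : Fin T → ∀ m, H m) (θ : Fin M → ℝ),
      (∀ m, 0 ≤ θ m) ∧ (∑ m, θ m ^ r) ≤ 1 ∧ (∀ t, (∑ m, ‖w t m‖ ^ 2) ≤ R) ∧
      v = (2 / ((T : ℝ) * N)) *
        ∑ t, ∑ i, sgn (σ t i) * ∑ m, Real.sqrt (θ m) * ⟪w t m, φ m t i⟫})

namespace ERCaux

variable {M T N : ℕ} {H : Fin M → Type*} [∀ m, NormedAddCommGroup (H m)]
  [∀ m, InnerProductSpace ℝ (H m)]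

/-- The aggregated vector `V_{m,t} = Σ_i σ_t^i φ_{m,t}^i`. -/
def Vv (φ : ∀ m, Fin T → Fin N → H m) (σ : Fin T → Fin N → Bool) (m : Fin M) (t : Fin T) :
    H m := ∑ i, sgn (σ t i) • φ m t i

lemma sum_rewrite (φ : ∀ m, Fin T → Fin N → H m) (σ : Fin T → Fin N → Bool)
    (w : Fin T → ∀ m, H m) (θ : Fin M → ℝ) :
    (∑ t, ∑ i, sgn (σ t i) * ∑ m, Real.sqrt (θ m) * ⟪w t m, φ m t i⟫)
      = ∑ t, ∑ m, Real.sqrt (θ m) * ⟪w t m, Vv φ σ m t⟫ := by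
  refine Finset.sum_congr rfl fun t _ => ?_
  have h1 : ∀ m, Real.sqrt (θ m) * ⟪w t m, Vv φ σ m t⟫
      = ∑ i, sgn (σ t i) * (Real.sqrt (θ m) * ⟪w t m, φ m t i⟫) := by
    intro m
    rw [Vv, inner_sum, Finset.mul_sum]
    exact Finset.sum_congr rfl fun i _ => by rw [real_inner_smul_right]; ring
  simp_rw [h1, Finset.mul_sum]
  exact Finset.sum_comm

lemma theta_le_one {θ : Fin M → ℝ} {r : ℝ} (hr : 1 ≤ r) (hθ0 : ∀ m, 0 ≤ θ m)
    (hθr : (∑ m, θ m ^ r) ≤ 1) (m : Fin M) : θ m ≤ 1 := by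
  have h1 : θ m ^ r ≤ 1 := by
    refine le_trans (Finset.single_le_sum (f := fun m => θ m ^ r)
      (fun m _ => Real.rpow_nonneg (hθ0 m) r) (Finset.mem_univ m)) hθr
  by_contra hc
  push_neg at hc
  have : (1:ℝ) < θ m ^ r := by
    calc (1:ℝ) = 1 ^ r := (Real.one_rpow r).symm
    _ < θ m ^ r := Real.rpow_lt_rpow (by norm_num) hc (by linarith)
  linarith

lemma lam_le_one {lam : Fin T → ℝ} {s : ℝ} (hs : 1 ≤ s) (h0 : ∀ t, 0 ≤ lam t)
    (h1 : (∑ t, lam t ^ s) ≤ 1) (t : Fin T) : lam t ≤ 1 := by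
  have h2 : lam t ^ s ≤ 1 := by
    refine le_trans (Finset.single_le_sum (f := fun t => lam t ^ s)
      (fun t _ => Real.rpow_nonneg (h0 t) s) (Finset.mem_univ t)) h1
  by_contra hc
  push_neg at hc
  have : (1:ℝ) < lam t ^ s := by
    calc (1:ℝ) = 1 ^ s := (Real.one_rpow s).symm
    _ < lam t ^ s := Real.rpow_lt_rpow (by norm_num) hc (by linarith)
  linarith

/-- Cauchy–Schwarz step: per task `t`. -/
lemma cs_bound {B : ℝ} (hB : 0 ≤ B) (θ : Fin M → ℝ) (hθ : ∀ m, 0 ≤ θ m)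
    (w : ∀ m, H m) (V : ∀ m, H m) (hw : (∑ m, ‖w m‖ ^ 2) ≤ B) :
    (∑ m, Real.sqrt (θ m) * ⟪w m, V m⟫)
      ≤ Real.sqrt B * Real.sqrt (∑ m, θ m * ‖V m‖ ^ 2) := by
  have h1 : (∑ m, Real.sqrt (θ m) * ⟪w m, V m⟫)
      ≤ ∑ m, ‖w m‖ * (Real.sqrt (θ m) * ‖V m‖) := by
    refine Finset.sum_le_sum fun m _ => ?_
    have h := real_inner_le_norm (w m) (V m)
    nlinarith [Real.sqrt_nonneg (θ m), norm_nonneg (w m), norm_nonneg (V m)]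
  have h2 : (∑ m, ‖w m‖ * (Real.sqrt (θ m) * ‖V m‖))
      ≤ Real.sqrt (∑ m, ‖w m‖ ^ 2) * Real.sqrt (∑ m, (Real.sqrt (θ m) * ‖V m‖) ^ 2) :=
    Real.sum_mul_le_sqrt_mul_sqrt Finset.univ _ _
  have h3 : (∑ m, (Real.sqrt (θ m) * ‖V m‖) ^ 2) = ∑ m, θ m * ‖V m‖ ^ 2 := by
    refine Finset.sum_congr rfl fun m _ => ?_
    rw [mul_pow, Real.sq_sqrt (hθ m)]
  have h4 : Real.sqrt (∑ m, ‖w m‖ ^ 2) ≤ Real.sqrt B := Real.sqrt_le_sqrt hw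
  calc (∑ m, Real.sqrt (θ m) * ⟪w m, V m⟫) ≤ _ := h1
    _ ≤ _ := h2
    _ = Real.sqrt (∑ m, ‖w m‖ ^ 2) * Real.sqrt (∑ m, θ m * ‖V m‖ ^ 2) := by rw [h3]
    _ ≤ Real.sqrt B * Real.sqrt (∑ m, θ m * ‖V m‖ ^ 2) :=
        mul_le_mul_of_nonneg_right h4 (Real.sqrt_nonneg _)

/-- Attainment of the Cauchy–Schwarz bound. -/
lemma attain_t {R : ℝ} (hR : 0 ≤ R) (θ : Fin M → ℝ) (hθ : ∀ m, 0 ≤ θ m) (V : ∀ m, H m) :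
    ∃ w : ∀ m, H m, (∑ m, ‖w m‖ ^ 2) ≤ R ∧
      (∑ m, Real.sqrt (θ m) * ⟪w m, V m⟫)
        = Real.sqrt R * Real.sqrt (∑ m, θ m * ‖V m‖ ^ 2) := by
  set S := ∑ m, θ m * ‖V m‖ ^ 2 with hSdef
  have hS0 : 0 ≤ S := Finset.sum_nonneg fun m _ =>
    mul_nonneg (hθ m) (pow_nonneg (norm_nonneg _) 2)
  by_cases hc : Real.sqrt S = 0
  · refine ⟨0, by simp [hR], by simp [hc]⟩
  · have hcpos : 0 < Real.sqrt S := lt_of_le_of_ne (Real.sqrt_nonneg _) (Ne.symm hc)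
    have hSpos : 0 < S := by
      rcases lt_or_eq_of_le hS0 with h | h
      · exact h
      · exact absurd (by rw [← h]; simp) hc
    set c := Real.sqrt S with hcdef
    have hc2 : c ^ 2 = S := Real.sq_sqrt hS0
    refine ⟨fun m => ((Real.sqrt R / c) * Real.sqrt (θ m)) • V m, ?_, ?_⟩
    · have : (∑ m, ‖((Real.sqrt R / c) * Real.sqrt (θ m)) • V m‖ ^ 2)
          = (R / c ^ 2) * S := by
        rw [hSdef, Finset.mul_sum]
        refine Finset.sum_congr rfl fun m _ => ?_
        rw [norm_smul, mul_pow, Real.norm_eq_abs, sq_abs, mul_pow, div_pow,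
          Real.sq_sqrt hR, Real.sq_sqrt (hθ m)]
        ring
      rw [this, hc2, div_mul_cancel₀ _ (ne_of_gt hSpos)]
    · have hv : (∑ m, Real.sqrt (θ m) * ⟪((Real.sqrt R / c) * Real.sqrt (θ m)) • V m, V m⟫)
          = (Real.sqrt R / c) * S := by
        rw [hSdef, Finset.mul_sum]
        refine Finset.sum_congr rfl fun m _ => ?_
        rw [real_inner_smul_left, real_inner_self_eq_norm_sq]
        linear_combination (Real.sqrt R / c * ‖V m‖ ^ 2) * Real.mul_self_sqrt (hθ m)
      rw [hv]
      rw [← hc2]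
      field_simp
  


variable {M T N : ℕ} {H : Fin M → Type*} [∀ m, NormedAddCommGroup (H m)]
  [∀ m, InnerProductSpace ℝ (H m)]

/-- Per-σ value set of the equal-radius class. -/
def Tset (φ : ∀ m, Fin T → Fin N → H m) (r R : ℝ) (σ : Fin T → Fin N → Bool) : Set ℝ :=
  {v : ℝ | ∃ (w : Fin T → ∀ m, H m) (θ : Fin M → ℝ),
      (∀ m, 0 ≤ θ m) ∧ (∑ m, θ m ^ r) ≤ 1 ∧ (∀ t, (∑ m, ‖w t m‖ ^ 2) ≤ R) ∧
      v = (2 / ((T : ℝ) * N)) *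
        ∑ t, ∑ i, sgn (σ t i) * ∑ m, Real.sqrt (θ m) * ⟪w t m, φ m t i⟫}

/-- Per-σ value set of the θ-optimization. -/
def ThSet (φ : ∀ m, Fin T → Fin N → H m) (r : ℝ) (σ : Fin T → Fin N → Bool) : Set ℝ :=
  {v : ℝ | ∃ θ : Fin M → ℝ,
      (∀ m, 0 ≤ θ m) ∧ (∑ m, θ m ^ r) ≤ 1 ∧
      v = ∑ t, Real.sqrt (∑ m, θ m * ‖Vv φ σ m t‖ ^ 2)}

/-- Per-σ value set of the class `F_{s,r}`. -/
def Mset (φ : ∀ m, Fin T → Fin N → H m) (s r R : ℝ) (σ : Fin T → Fin N → Bool) : Set ℝ :=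
  {v : ℝ | ∃ (w : Fin T → ∀ m, H m) (θ : Fin M → ℝ) (lam : Fin T → ℝ),
      MKadm H s r R w θ lam ∧
      v = (2 / ((T : ℝ) * N)) *
        ∑ t, ∑ i, sgn (σ t i) * ∑ m, Real.sqrt (θ m) * ⟪w t m, φ m t i⟫}

section PerSigma

variable (φ : ∀ m, Fin T → Fin N → H m) {r R : ℝ} (σ : Fin T → Fin N → Bool)

lemma zero_mem_ThSet (hr : 1 ≤ r) : (0 : ℝ) ∈ ThSet φ r σ := by
  refine ⟨0, fun m => le_refl 0, ?_, by simp⟩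
  simp [Real.zero_rpow (by intro h; rw [h] at hr; linarith : r ≠ 0)]

lemma ThSet_bddAbove (hr : 1 ≤ r) : BddAbove (ThSet φ r σ) := by
  refine ⟨∑ t, Real.sqrt (∑ m, ‖Vv φ σ m t‖ ^ 2), fun y hy => ?_⟩
  obtain ⟨θ, hθ0, hθr, rfl⟩ := hy
  refine Finset.sum_le_sum fun t _ => Real.sqrt_le_sqrt (Finset.sum_le_sum fun m _ => ?_)
  have h1 : θ m ≤ 1 := theta_le_one hr hθ0 hθr m
  nlinarith [pow_nonneg (norm_nonneg (Vv φ σ m t)) 2, hθ0 m]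

lemma Tset_le (hr : 1 ≤ r) (hR : 0 < R) :
    ∀ x ∈ Tset φ r R σ,
      x ≤ (2 / ((T : ℝ) * N)) * (Real.sqrt R * sSup (ThSet φ r σ)) := by
  rintro x ⟨w, θ, hθ0, hθr, hw, rfl⟩
  rw [sum_rewrite]
  have hy : (∑ t, Real.sqrt (∑ m, θ m * ‖Vv φ σ m t‖ ^ 2)) ∈ ThSet φ r σ :=
    ⟨θ, hθ0, hθr, rfl⟩
  have h1 : (∑ t, ∑ m, Real.sqrt (θ m) * ⟪w t m, Vv φ σ m t⟫)
      ≤ Real.sqrt R * sSup (ThSet φ r σ) := by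
    calc (∑ t, ∑ m, Real.sqrt (θ m) * ⟪w t m, Vv φ σ m t⟫)
        ≤ ∑ t, Real.sqrt R * Real.sqrt (∑ m, θ m * ‖Vv φ σ m t‖ ^ 2) :=
          Finset.sum_le_sum fun t _ =>
            cs_bound hR.le θ hθ0 (w t) (fun m => Vv φ σ m t) (hw t)
      _ = Real.sqrt R * ∑ t, Real.sqrt (∑ m, θ m * ‖Vv φ σ m t‖ ^ 2) :=
          (Finset.mul_sum _ _ _).symm
      _ ≤ Real.sqrt R * sSup (ThSet φ r σ) :=
          mul_le_mul_of_nonneg_left (le_csSup (ThSet_bddAbove φ σ hr) hy)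
            (Real.sqrt_nonneg R)
  exact mul_le_mul_of_nonneg_left h1 (by positivity)

lemma attain_mem_Tset (hR : 0 < R) :
    ∀ y ∈ ThSet φ r σ, (2 / ((T : ℝ) * N)) * (Real.sqrt R * y) ∈ Tset φ r R σ := by
  rintro y ⟨θ, hθ0, hθr, rfl⟩
  have h := fun t => attain_t hR.le θ hθ0 (fun m => Vv φ σ m t)
  choose w hw1 hw2 using h
  refine ⟨w, θ, hθ0, hθr, hw1, ?_⟩
  rw [sum_rewrite]
  have : (∑ t, ∑ m, Real.sqrt (θ m) * ⟪w t m, Vv φ σ m t⟫)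
      = Real.sqrt R * ∑ t, Real.sqrt (∑ m, θ m * ‖Vv φ σ m t‖ ^ 2) := by
    rw [Finset.mul_sum]
    exact Finset.sum_congr rfl fun t _ => hw2 t
  rw [this]

lemma Tset_nonempty (hr : 1 ≤ r) (hR : 0 < R) : (Tset φ r R σ).Nonempty := by
  refine ⟨_, attain_mem_Tset φ σ hR 0 (zero_mem_ThSet φ σ hr)⟩

lemma Tset_bddAbove (hr : 1 ≤ r) (hR : 0 < R) : BddAbove (Tset φ r R σ) :=
  ⟨_, Tset_le φ σ hr hR⟩

lemma sSup_Tset_eq (hTN : (0:ℝ) < (T : ℝ) * (N : ℝ)) (hr : 1 ≤ r) (hR : 0 < R) :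
    sSup (Tset φ r R σ)
      = (2 / ((T : ℝ) * N)) * (Real.sqrt R * sSup (ThSet φ r σ)) := by
  have hsR : 0 < Real.sqrt R := Real.sqrt_pos.mpr hR
  have hc : (0:ℝ) < (2 / ((T : ℝ) * N)) * Real.sqrt R :=
    mul_pos (div_pos two_pos hTN) hsR
  refine le_antisymm (csSup_le (Tset_nonempty φ σ hr hR) (Tset_le φ σ hr hR)) ?_
  have h1 : sSup (ThSet φ r σ)
      ≤ sSup (Tset φ r R σ) / ((2 / ((T : ℝ) * N)) * Real.sqrt R) := by
    refine csSup_le ⟨0, zero_mem_ThSet φ σ hr⟩ fun y hy => ?_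
    rw [le_div_iff₀ hc]
    calc y * (2 / ((T : ℝ) * N) * Real.sqrt R)
        = (2 / ((T : ℝ) * N)) * (Real.sqrt R * y) := by ring
      _ ≤ sSup (Tset φ r R σ) :=
          le_csSup (Tset_bddAbove φ σ hr hR) (attain_mem_Tset φ σ hR y hy)
  calc (2 / ((T : ℝ) * N)) * (Real.sqrt R * sSup (ThSet φ r σ))
      = sSup (ThSet φ r σ) * ((2 / ((T : ℝ) * N)) * Real.sqrt R) := by ring
    _ ≤ sSup (Tset φ r R σ) := by rw [← le_div_iff₀ hc]; exact h1

end PerSigma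



variable {M T N : ℕ} {H : Fin M → Type*} [∀ m, NormedAddCommGroup (H m)]
  [∀ m, InnerProductSpace ℝ (H m)]

section MsetLemmas

variable (φ : ∀ m, Fin T → Fin N → H m) {s r R : ℝ} (σ : Fin T → Fin N → Bool)

lemma Mset_subset_Tset (hs : 1 ≤ s) (hR : 0 < R) :
    Mset φ s r R σ ⊆ Tset φ r R σ := by
  rintro x ⟨w, θ, lam, ⟨hθ0, hθr, hl0, hls, hwl⟩, rfl⟩
  refine ⟨w, θ, hθ0, hθr, fun t => le_trans (hwl t) ?_, rfl⟩
  have h1 := lam_le_one hs hl0 hls t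
  have h2 : lam t ^ 2 ≤ 1 := by nlinarith [hl0 t]
  calc lam t ^ 2 * R ≤ 1 * R := mul_le_mul_of_nonneg_right h2 hR.le
    _ = R := one_mul R

lemma Mset_nonempty (hs : 1 ≤ s) (hr : 1 ≤ r) : (Mset φ s r R σ).Nonempty := by
  refine ⟨0, 0, 0, 0, ⟨fun m => le_refl 0, ?_, fun t => le_refl 0, ?_, fun t => by simp⟩, ?_⟩
  · simp [Real.zero_rpow (by intro h; rw [h] at hr; linarith : r ≠ 0)]
  · simp [Real.zero_rpow (by intro h; rw [h] at hs; linarith : s ≠ 0)]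
  · simp

lemma scale_mem_Mset (hT : 0 < T) (hs : 1 ≤ s) :
    ∀ x ∈ Tset φ r R σ, ((T : ℝ) ^ (-(1 / s))) * x ∈ Mset φ s r R σ := by
  have hTpos : (0 : ℝ) < (T : ℝ) := by exact_mod_cast hT
  have hspos : (0 : ℝ) < s := lt_of_lt_of_le one_pos hs
  set c : ℝ := (T : ℝ) ^ (-(1 / s)) with hcdef
  have hcpos : 0 < c := Real.rpow_pos_of_pos hTpos _
  rintro x ⟨w, θ, hθ0, hθr, hw, rfl⟩
  refine ⟨fun t m => c • w t m, θ, fun _ => c, ⟨hθ0, hθr, fun _ => hcpos.le, ?_, ?_⟩, ?_⟩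
  · have hcs : c ^ s = (T : ℝ)⁻¹ := by
      rw [hcdef, ← Real.rpow_mul hTpos.le, show -(1 / s) * s = -1 by field_simp,
        Real.rpow_neg_one]
    exact le_of_eq (by
      rw [Finset.sum_const, Finset.card_univ, Fintype.card_fin, nsmul_eq_mul, hcs,
        mul_inv_cancel₀ (ne_of_gt hTpos)])
  · intro t
    have h1 : (∑ m, ‖c • w t m‖ ^ 2) = c ^ 2 * ∑ m, ‖w t m‖ ^ 2 := by
      rw [Finset.mul_sum]
      refine Finset.sum_congr rfl fun m _ => ?_
      rw [norm_smul, mul_pow, Real.norm_eq_abs, sq_abs]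
    rw [h1]
    exact mul_le_mul_of_nonneg_left (hw t) (sq_nonneg c)
  · have hX : (∑ t, ∑ i, sgn (σ t i) * ∑ m, Real.sqrt (θ m) * ⟪c • w t m, φ m t i⟫)
        = c * ∑ t, ∑ i, sgn (σ t i) * ∑ m, Real.sqrt (θ m) * ⟪w t m, φ m t i⟫ := by
      simp_rw [real_inner_smul_left, Finset.mul_sum]
      exact Finset.sum_congr rfl fun t _ => Finset.sum_congr rfl fun i _ =>
        Finset.sum_congr rfl fun m _ => by ring
    rw [hX]; ring

end MsetLemmas

lemma Eσ_smul (T N : ℕ) (c : ℝ) (f : (Fin T → Fin N → Bool) → ℝ) :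
    Eσ T N (fun σ => c * f σ) = c * Eσ T N f := by
  unfold Eσ
  rw [← Finset.mul_sum, mul_div_assoc]

lemma Eσ_mono (T N : ℕ) {f g : (Fin T → Fin N → Bool) → ℝ} (h : ∀ σ, f σ ≤ g σ) :
    Eσ T N f ≤ Eσ T N g := by
  unfold Eσ
  have hc : (0:ℝ) < (Fintype.card (Fin T → Fin N → Bool) : ℝ) := by
    exact_mod_cast Fintype.card_pos
  exact div_le_div_of_nonneg_right (Finset.sum_le_sum fun σ _ => h σ) hc.le

end ERCaux

open ERCaux

/-- The equal-radius multi-kernel class `F̃_r` satisfies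
`R̂(F̃_r) = (2√R/(TN)) E_σ sup_{θ ⪰ 0, ‖θ‖_r ≤ 1} Σ_t √(Σ_m θ_m ‖Σ_i σ_t^i φ_{m,t}^i‖²)`
(the `s* = 1` value of the formula for `R̂(F_{s,r})`), hence
`R̂(F̃_r) = sup_{s ≥ 1} R̂(F_{s,r}) = lim_{s→∞} R̂(F_{s,r})`:
`F̃_r` is the `s = +∞` member of the family `F_{s,r}`. -/
theorem erc_tildeR_eq {M : ℕ} (H : Fin M → Type*) [∀ m, NormedAddCommGroup (H m)]
    [∀ m, InnerProductSpace ℝ (H m)]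
    (T N : ℕ) (hT : 0 < T) (hN : 0 < N) (hM : 0 < M) (R : ℝ) (hR : 0 < R)
    (φ : ∀ m, Fin T → Fin N → H m) (r : ℝ) (hr : 1 ≤ r) :
    ERCtildeR H T N φ r R =
        (2 * Real.sqrt R / ((T : ℝ) * N)) *
          Eσ T N (fun σ => sSup {v : ℝ | ∃ θ : Fin M → ℝ,
            (∀ m, 0 ≤ θ m) ∧ (∑ m, θ m ^ r) ≤ 1 ∧
            v = ∑ t, Real.sqrt (∑ m, θ m * ‖∑ i, sgn (σ t i) • φ m t i‖ ^ 2)}) ∧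
      ERCtildeR H T N φ r R =
        sSup {v : ℝ | ∃ s : ℝ, 1 ≤ s ∧ v = ERCmk H T N φ s r R} ∧
      Filter.Tendsto (fun s : ℝ => ERCmk H T N φ s r R) Filter.atTop
        (nhds (ERCtildeR H T N φ r R)) := by
  have hTN : (0:ℝ) < (T : ℝ) * (N : ℝ) := by
    have h1 : (0:ℝ) < (T : ℝ) := by exact_mod_cast hT
    have h2 : (0:ℝ) < (N : ℝ) := by exact_mod_cast hN
    exact mul_pos h1 h2
  have hE : ERCtildeR H T N φ r R = Eσ T N (fun σ => sSup (Tset φ r R σ)) := rfl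
  -- Part 1
  have h1 : ERCtildeR H T N φ r R
      = (2 * Real.sqrt R / ((T : ℝ) * N)) * Eσ T N (fun σ => sSup (ThSet φ r σ)) := by
    rw [hE]
    have hfun : (fun σ : Fin T → Fin N → Bool => sSup (Tset φ r R σ))
        = fun σ => (2 / ((T : ℝ) * N) * Real.sqrt R) * sSup (ThSet φ r σ) := by
      funext σ
      rw [sSup_Tset_eq φ σ hTN hr hR, mul_assoc]
    rw [hfun, Eσ_smul,
      show (2:ℝ) / ((T : ℝ) * N) * Real.sqrt R = 2 * Real.sqrt R / ((T : ℝ) * N) by ring]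
  -- upper and lower bounds for `ERCmk s`
  have hub : ∀ s : ℝ, 1 ≤ s → ERCmk H T N φ s r R ≤ ERCtildeR H T N φ r R := by
    intro s hs
    rw [hE]
    exact Eσ_mono T N fun σ => csSup_le_csSup (Tset_bddAbove φ σ hr hR)
      (Mset_nonempty φ σ hs hr) (Mset_subset_Tset φ σ hs hR)
  have hlb : ∀ s : ℝ, 1 ≤ s →
      ((T : ℝ) ^ (-(1 / s))) * ERCtildeR H T N φ r R ≤ ERCmk H T N φ s r R := by
    intro s hs
    have hc : (0:ℝ) < (T : ℝ) ^ (-(1 / s)) :=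
      Real.rpow_pos_of_pos (by exact_mod_cast hT) _
    have hper : ∀ σ : Fin T → Fin N → Bool,
        ((T : ℝ) ^ (-(1 / s))) * sSup (Tset φ r R σ) ≤ sSup (Mset φ s r R σ) := by
      intro σ
      have hMb : BddAbove (Mset φ s r R σ) :=
        (Tset_bddAbove φ σ hr hR).mono (Mset_subset_Tset φ σ hs hR)
      have h2 : sSup (Tset φ r R σ)
          ≤ sSup (Mset φ s r R σ) / ((T : ℝ) ^ (-(1 / s))) := by
        refine csSup_le (Tset_nonempty φ σ hr hR) fun x hx => ?_
        rw [le_div_iff₀ hc, mul_comm]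
        exact le_csSup hMb (scale_mem_Mset φ σ hT hs x hx)
      calc ((T : ℝ) ^ (-(1 / s))) * sSup (Tset φ r R σ)
          = sSup (Tset φ r R σ) * ((T : ℝ) ^ (-(1 / s))) := mul_comm _ _
        _ ≤ sSup (Mset φ s r R σ) := by rw [← le_div_iff₀ hc]; exact h2
    calc ((T : ℝ) ^ (-(1 / s))) * ERCtildeR H T N φ r R
        = Eσ T N (fun σ => ((T : ℝ) ^ (-(1 / s))) * sSup (Tset φ r R σ)) := by
          rw [Eσ_smul, hE]
      _ ≤ Eσ T N (fun σ => sSup (Mset φ s r R σ)) := Eσ_mono T N hper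
      _ = ERCmk H T N φ s r R := rfl
  -- Part 3
  have hcT : Filter.Tendsto (fun s : ℝ => (T : ℝ) ^ (-(1 / s))) Filter.atTop (nhds 1) := by
    have hTpos : (0:ℝ) < (T : ℝ) := by exact_mod_cast hT
    have hexp : Filter.Tendsto (fun s : ℝ => -(1 / s)) Filter.atTop (nhds 0) := by
      have h0 : Filter.Tendsto (fun s : ℝ => (1 / s)) Filter.atTop (nhds 0) := by
        simpa [one_div] using (tendsto_inv_atTop_zero (𝕜 := ℝ))
      simpa using h0.neg
    have hcont := (Real.continuousAt_const_rpow (b := 0) (ne_of_gt hTpos)).tendsto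
    have := hcont.comp hexp
    simpa [Real.rpow_zero, Function.comp_def] using this
  have h3 : Filter.Tendsto (fun s : ℝ => ERCmk H T N φ s r R) Filter.atTop
      (nhds (ERCtildeR H T N φ r R)) := by
    have hlow : Filter.Tendsto
        (fun s : ℝ => ((T : ℝ) ^ (-(1 / s))) * ERCtildeR H T N φ r R)
        Filter.atTop (nhds (ERCtildeR H T N φ r R)) := by
      simpa using hcT.mul_const (ERCtildeR H T N φ r R)
    refine tendsto_of_tendsto_of_tendsto_of_le_of_le' hlow tendsto_const_nhds ?_ ?_
    · exact (Filter.eventually_ge_atTop 1).mono fun s hs => hlb s hs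
    · exact (Filter.eventually_ge_atTop 1).mono fun s hs => hub s hs
  -- Part 2
  have h2 : ERCtildeR H T N φ r R
      = sSup {v : ℝ | ∃ s : ℝ, 1 ≤ s ∧ v = ERCmk H T N φ s r R} := by
    have hne : {v : ℝ | ∃ s : ℝ, 1 ≤ s ∧ v = ERCmk H T N φ s r R}.Nonempty :=
      ⟨ERCmk H T N φ 1 r R, 1, le_refl 1, rfl⟩
    have hbdd : BddAbove {v : ℝ | ∃ s : ℝ, 1 ≤ s ∧ v = ERCmk H T N φ s r R} :=
      ⟨ERCtildeR H T N φ r R, by rintro v ⟨s, hs, rfl⟩; exact hub s hs⟩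
    refine le_antisymm ?_ (csSup_le hne (by rintro v ⟨s, hs, rfl⟩; exact hub s hs))
    refine le_of_tendsto h3 ?_
    exact (Filter.eventually_ge_atTop 1).mono fun s hs => le_csSup hbdd ⟨s, hs, rfl⟩
  exact ⟨h1, h2, h3⟩

end
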